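/- Let T be a well-separated tree metric on alphabet Σ (distance between two nodes is the maximum edge weight on the tree path between them, with weights non-increasing along root-to-leaf paths), and let s_r map each letter to its highest ancestor reachable via edges of weight at most r/4. Then for any two letters l₁, l₂ with s_r(l₁) ≠ s_r(l₂), we have d(s_r(l₁), s_r(l₂)) > r/4. -/
import Mathlib


/-- `xb` is an expansion of `x`: each letter of `x` is duplicated in place a positive
number of times. -/
def IsExpansion {α : Type*} (x xb : List α) : Prop :=
  ∃ ks : List ℕ, ks.length = x.length ∧ (∀ k ∈ ks, 0 < k) ∧
    xb = (List.zipWith (fun a k => List.replicate k a) x ks).flatten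

/-- `(xb, yb)` is a correspondence between `x` and `y`: a pair of equal-length expansions. -/
def IsCorrespondence {α : Type*} (x y xb yb : List α) : Prop :=
  IsExpansion x xb ∧ IsExpansion y yb ∧ xb.length = yb.length

/-- The cost of a correspondence: summed distances of aligned letters. -/
noncomputable def corrCost {α : Type*} (δ : α → α → ℝ) (xb yb : List α) : ℝ :=
  (List.zipWith δ xb yb).sum

/-- Dynamic time warping distance with respect to a distance function `δ`. -/
noncomputable def dtw {α : Type*} (δ : α → α → ℝ) (x y : List α) : ℝ :=
  sInf {c | ∃ xb yb, IsCorrespondence x y xb yb ∧ c = corrCost δ xb yb}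

/-- Generalized Hamming distance on letters. -/
noncomputable def hamDist {α : Type*} [DecidableEq α] (a b : α) : ℝ := if a = b then 0 else 1

/-- DTW over generalized Hamming space. -/
noncomputable def dtw0 {α : Type*} [DecidableEq α] (x y : List α) : ℝ := dtw hamDist x y

/-- A well-separated tree metric: a rooted tree on Σ with positive edge weights
(`w v` is the weight of the edge from `v` to its parent) that are non-increasing
along root-to-leaf paths. -/
structure WSTree (σ : Type*) where
  root : σ
  par : σ → σ
  w : σ → ℝ
  depth : σ → ℕ
  depth_root : depth root = 0
  root_of_depth : ∀ v, depth v = 0 → v = root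
  par_root : par root = root
  depth_par : ∀ v, v ≠ root → depth (par v) + 1 = depth v
  w_pos : ∀ v, v ≠ root → 0 < w v
  w_mono : ∀ v, v ≠ root → par v ≠ root → w v ≤ w (par v)

/-- The k-th iterated ancestor of v. -/
def WSTree.anc {σ : Type*} (T : WSTree σ) (v : σ) : ℕ → σ
  | 0 => v
  | k + 1 => T.par (T.anc v k)

/-- The maximum weight among the first k edges on the path from v towards the root. -/
noncomputable def WSTree.upMax {σ : Type*} (T : WSTree σ) (v : σ) : ℕ → ℝ
  | 0 => 0
  | k + 1 => max (T.upMax v k) (T.w (T.anc v k))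

/-- The well-separated tree metric distance: the maximum edge weight on the tree path
between u and v (minimized over common ancestors through which the path may pass). -/
noncomputable def WSTree.tdist {σ : Type*} (T : WSTree σ) (u v : σ) : ℝ :=
  sInf {c | ∃ j k, T.anc u j = T.anc v k ∧ c = max (T.upMax u j) (T.upMax v k)}

/-- The number of steps up from v to its highest ancestor reachable via edges of
weight at most r/4. -/
noncomputable def WSTree.srIdx {σ : Type*} (T : WSTree σ) (r : ℝ) (v : σ) : ℕ :=
  sSup {k | k ≤ T.depth v ∧ ∀ i < k, T.w (T.anc v i) ≤ r / 4}

/-- The r-simplification on letters: the highest ancestor of v reachable from v via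
edges of weight at most r/4. -/
noncomputable def WSTree.sr {σ : Type*} (T : WSTree σ) (r : ℝ) (v : σ) : σ :=
  T.anc v (T.srIdx r v)

lemma WSTree.anc_succ' {σ : Type*} (T : WSTree σ) (v : σ) (k : ℕ) :
    T.anc v (k + 1) = T.anc (T.par v) k := by
  induction k with
  | zero => rfl
  | succ k ih => show T.par (T.anc v (k+1)) = T.par (T.anc (T.par v) k); rw [ih]

lemma WSTree.anc_root {σ : Type*} (T : WSTree σ) (k : ℕ) : T.anc T.root k = T.root := by
  induction k with
  | zero => rfl
  | succ k ih => show T.par (T.anc T.root k) = T.root; rw [ih, T.par_root]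

lemma WSTree.anc_depth_root {σ : Type*} (T : WSTree σ) (v : σ) :
    T.anc v (T.depth v) = T.root := by
  generalize hd : T.depth v = n
  induction n using Nat.strong_induction_on generalizing v with
  | _ n ih =>
    by_cases hv : v = T.root
    · subst hv; exact T.anc_root n
    · have h1 := T.depth_par v hv
      rw [hd] at h1
      cases n with
      | zero => exact absurd (T.root_of_depth v hd) hv
      | succ m =>
        rw [T.anc_succ']
        have hm : T.depth (T.par v) = m := by omega
        exact ih m (by omega) (T.par v) hm

lemma WSTree.upMax_mono {σ : Type*} (T : WSTree σ) (v : σ) {j k : ℕ} (h : j ≤ k) :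
    T.upMax v j ≤ T.upMax v k := by
  induction k with
  | zero => simp_all
  | succ k ih =>
    rcases Nat.lt_or_ge j (k+1) with hlt | hge
    · exact le_trans (ih (by omega)) (le_max_left _ _)
    · have : j = k + 1 := by omega
      subst this; rfl

lemma WSTree.w_le_upMax {σ : Type*} (T : WSTree σ) (v : σ) {i k : ℕ} (h : i < k) :
    T.w (T.anc v i) ≤ T.upMax v k := by
  have h1 : T.w (T.anc v i) ≤ T.upMax v (i + 1) := le_max_right _ _
  exact le_trans h1 (T.upMax_mono v h)

lemma WSTree.srIdx_mem {σ : Type*} (T : WSTree σ) (r : ℝ) (v : σ) :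
    T.srIdx r v ≤ T.depth v ∧ ∀ i < T.srIdx r v, T.w (T.anc v i) ≤ r / 4 := by
  have hne : ({k | k ≤ T.depth v ∧ ∀ i < k, T.w (T.anc v i) ≤ r / 4} : Set ℕ).Nonempty :=
    ⟨0, by simp⟩
  have hbdd : BddAbove ({k | k ≤ T.depth v ∧ ∀ i < k, T.w (T.anc v i) ≤ r / 4} : Set ℕ) :=
    ⟨T.depth v, fun k hk => hk.1⟩
  exact Nat.sSup_mem hne hbdd

lemma WSTree.depth_anc {σ : Type*} (T : WSTree σ) (v : σ) (m : ℕ)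
    (h : T.anc v m ≠ T.root) : T.depth (T.anc v m) + m = T.depth v := by
  induction m with
  | zero => rfl
  | succ m ih =>
    have hm : T.anc v m ≠ T.root := by
      intro he
      apply h
      show T.par (T.anc v m) = T.root
      rw [he, T.par_root]
    have h1 := T.depth_par _ hm
    have h2 := ih hm
    show T.depth (T.par (T.anc v m)) + (m + 1) = T.depth v
    omega

lemma WSTree.w_sr_gt {σ : Type*} (T : WSTree σ) (r : ℝ) (v : σ)
    (h : T.sr r v ≠ T.root) : r / 4 < T.w (T.sr r v) := by
  by_contra hle
  push_neg at hle
  obtain ⟨h1, h2⟩ := T.srIdx_mem r v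
  set m := T.srIdx r v with hm
  have h' : T.anc v m ≠ T.root := h
  rw [show T.sr r v = T.anc v m from rfl] at hle
  have hd : T.depth (T.anc v m) + m = T.depth v := T.depth_anc v m h'
  have hdm : 1 ≤ T.depth (T.anc v m) := by
    by_contra hc
    exact h' (T.root_of_depth _ (by omega))
  have hmemS : m + 1 ∈ {k | k ≤ T.depth v ∧ ∀ i < k, T.w (T.anc v i) ≤ r / 4} := by
    constructor
    · omega
    · intro i hi
      rcases Nat.lt_or_ge i m with hlt | hge
      · exact h2 i hlt
      · have : i = m := by omega
        subst this; exact hle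
  have hbdd : BddAbove ({k | k ≤ T.depth v ∧ ∀ i < k, T.w (T.anc v i) ≤ r / 4} : Set ℕ) :=
    ⟨T.depth v, fun k hk => hk.1⟩
  have hsup := le_csSup hbdd hmemS
  have : m + 1 ≤ m := hsup
  omega

/-- Distinct r-simplified letters are at distance greater than r/4. -/
theorem tdist_sr_gt {σ : Type*} (T : WSTree σ) (r : ℝ) (hr : 1 ≤ r) (l1 l2 : σ)
    (h : T.sr r l1 ≠ T.sr r l2) :
    r / 4 < T.tdist (T.sr r l1) (T.sr r l2) := by
  set u := T.sr r l1 with hu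
  set v := T.sr r l2 with hv
  set S : Set ℝ := {c | ∃ j k, T.anc u j = T.anc v k ∧
    c = max (T.upMax u j) (T.upMax v k)} with hS
  have hne : S.Nonempty := by
    refine ⟨max (T.upMax u (T.depth u)) (T.upMax v (T.depth v)),
      T.depth u, T.depth v, ?_, rfl⟩
    rw [T.anc_depth_root, T.anc_depth_root]
  -- key lemma: for any element of S, it exceeds r/4 via a uniform bound
  have key : ∃ m : ℝ, r / 4 < m ∧ ∀ c ∈ S, m ≤ c := by
    by_cases hur : u = T.root
    · have hvr : v ≠ T.root := fun hv' => h (hur.trans hv'.symm)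
      refine ⟨T.w v, T.w_sr_gt r l2 hvr, ?_⟩
      rintro c ⟨j, k, hjk, rfl⟩
      rw [hur, T.anc_root] at hjk
      have hk : 1 ≤ k := by
        rcases Nat.eq_zero_or_pos k with h0 | h1
        · subst h0; exact absurd hjk.symm hvr
        · exact h1
      exact le_max_of_le_right (T.w_le_upMax v hk)
    · by_cases hvr : v = T.root
      · refine ⟨T.w u, T.w_sr_gt r l1 hur, ?_⟩
        rintro c ⟨j, k, hjk, rfl⟩
        rw [hvr, T.anc_root] at hjk
        have hj : 1 ≤ j := by
          rcases Nat.eq_zero_or_pos j with h0 | h1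
          · subst h0; exact absurd hjk hur
          · exact h1
        exact le_max_of_le_left (T.w_le_upMax u hj)
      · refine ⟨min (T.w u) (T.w v), lt_min (T.w_sr_gt r l1 hur) (T.w_sr_gt r l2 hvr), ?_⟩
        rintro c ⟨j, k, hjk, rfl⟩
        rcases Nat.eq_zero_or_pos j with hj0 | hj1
        · have hk : 1 ≤ k := by
            rcases Nat.eq_zero_or_pos k with h0 | h1
            · exfalso; apply h; subst hj0 h0; exact hjk
            · exact h1
          exact le_max_of_le_right (le_trans (min_le_right _ _) (T.w_le_upMax v hk))
        · exact le_max_of_le_left (le_trans (min_le_left _ _) (T.w_le_upMax u hj1))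
  obtain ⟨m, hm, hlb⟩ := key
  calc r / 4 < m := hm
    _ ≤ sInf S := le_csInf hne hlb
    _ = T.tdist u v := rfl
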